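/- Suppose β is an 𝒮-measurable real random variable satisfying the marginal excursion effect model: e^{−β} · E[ p⁻¹ · E[A·Π·Y | ℋ] | 𝒮 ] = E[ (1−p)⁻¹ · E[(1−A)·Π·Y | ℋ] | 𝒮 ] almost surely, where Π := ∏_{j=1}^{Δ−1} (1 − A_j)/(1 − p_j). Let c be any ℋ-measurable real random variable, S any 𝒮-measurable real random variable, and define the weight J := (p̃/p)^{A} · ((1 − p̃)/(1 − p))^{1−A} · Π. Then, assuming all displayed expressions are integrable, E[ e^{−Aβ} · (Y − e^{c + Aβ}) · J · (A − p̃) · S ] = 0; i.e., each summand of the marginal estimating function m_M has mean zero regardless of whether the working model c is correctly specified and for any choice of 𝒮-measurable centering probability p̃. -/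

import Mathlib

open MeasureTheory Real Filter Topology

variable {Ω : Type*}

/-- `Π := ∏_{j=1}^{Δ−1} (1 − A_j)/(1 − p_j)`, where `p_j := E[A_j | ℳ_j]`
(empty product `= 1` when `Δ = 1`). -/
noncomputable def PiProd {m0 : MeasurableSpace Ω} (μ : Measure Ω)
    (M : ℕ → MeasurableSpace Ω) (Δ : ℕ) (Aseq : ℕ → Ω → ℝ) : Ω → ℝ :=
  fun ω => ∏ j ∈ Finset.Icc 1 (Δ - 1), (1 - Aseq j ω) / (1 - (μ[Aseq j|M j]) ω)

/-- `J := (p̃/p)^A · ((1 − p̃)/(1 − p))^{1−A} · Π`, where `p := E[A | ℋ]`. -/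
noncomputable def Jweight {m0 : MeasurableSpace Ω} (μ : Measure Ω)
    (mH : MeasurableSpace Ω) (M : ℕ → MeasurableSpace Ω) (Δ : ℕ)
    (A : Ω → ℝ) (Aseq : ℕ → Ω → ℝ) (ptil : Ω → ℝ) : Ω → ℝ :=
  fun ω => (ptil ω / (μ[A|mH]) ω) ^ (A ω) *
    ((1 - ptil ω) / (1 - (μ[A|mH]) ω)) ^ (1 - A ω) * PiProd μ M Δ Aseq ω

open Filter Topology in
lemma integrable_mul_condexp_aux {m m0 : MeasurableSpace Ω} (hm : m ≤ m0) (μ : Measure Ω)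
    [IsProbabilityMeasure μ] {g h : Ω → ℝ}
    (hg : Integrable g μ) (hg0 : 0 ≤ᵐ[μ] g)
    (hh : StronglyMeasurable[m] h) (hh0 : 0 ≤ᵐ[μ] h)
    (hint : Integrable (fun ω => h ω * (μ[g|m]) ω) μ) :
    Integrable (fun ω => h ω * g ω) μ := by
  set hn : ℕ → Ω → ℝ := fun n ω => min (h ω) n with hhn
  have hhn_sm : ∀ n, StronglyMeasurable[m] (hn n) :=
    by
    intro n
    have h2 : Measurable[m] (hn n) :=
      Measurable.min hh.measurable measurable_const
    exact h2.stronglyMeasurable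
  have hcond0 : 0 ≤ᵐ[μ] μ[g|m] := condExp_nonneg hg0
  have hint_n : ∀ n : ℕ, Integrable (fun ω => hn n ω * g ω) μ := by
    intro n
    refine hg.bdd_mul (c := (n : ℝ)) ((hhn_sm n).mono hm).aestronglyMeasurable ?_
    filter_upwards [hh0] with ω h0
    rw [Real.norm_eq_abs, abs_of_nonneg (le_min h0 (Nat.cast_nonneg n))]
    exact min_le_right _ _
  have hce : ∀ n : ℕ, μ[fun ω => hn n ω * g ω|m] =ᵐ[μ] fun ω => hn n ω * (μ[g|m]) ω := by
    intro n
    exact condExp_mul_of_stronglyMeasurable_left (hhn_sm n) (hint_n n) hg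
  have hIle : ∀ n : ℕ, ∫ ω, hn n ω * g ω ∂μ ≤ ∫ ω, h ω * (μ[g|m]) ω ∂μ := by
    intro n
    have h1 : ∫ ω, hn n ω * g ω ∂μ = ∫ ω, hn n ω * (μ[g|m]) ω ∂μ := by
      exact (integral_condExp hm).symm.trans (integral_congr_ae (hce n))
    rw [h1]
    refine integral_mono_ae (integrable_condExp.bdd_mul (c := (n : ℝ))
      ((hhn_sm n).mono hm).aestronglyMeasurable ?_) hint ?_
    · filter_upwards [hh0] with ω h0
      rw [Real.norm_eq_abs, abs_of_nonneg (le_min h0 (Nat.cast_nonneg n))]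
      exact min_le_right _ _
    · filter_upwards [hcond0] with ω h0
      exact mul_le_mul_of_nonneg_right (min_le_left _ _) h0
  refine ⟨(((hh.mono hm).aestronglyMeasurable).mul hg.1), ?_⟩
  rw [hasFiniteIntegral_iff_norm]
  have heq : ∀ᵐ ω ∂μ, ENNReal.ofReal ‖h ω * g ω‖ = ⨆ n : ℕ, ENNReal.ofReal (hn n ω * g ω) := by
    filter_upwards [hh0, hg0] with ω h0 g0
    rw [Real.norm_eq_abs, abs_of_nonneg (mul_nonneg h0 g0)]
    refine le_antisymm ?_ ?_
    · have : h ω * g ω = hn (⌈h ω⌉₊) ω * g ω := by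
        rw [hhn]; simp only
        rw [min_eq_left (Nat.le_ceil _)]
      rw [this]
      exact le_iSup (fun n => ENNReal.ofReal (hn n ω * g ω)) _
    · refine iSup_le fun n => ENNReal.ofReal_le_ofReal ?_
      exact mul_le_mul_of_nonneg_right (min_le_left _ _) g0
  rw [lintegral_congr_ae heq]
  have hmono : ∀ᵐ ω ∂μ, Monotone fun n : ℕ => ENNReal.ofReal (hn n ω * g ω) := by
    filter_upwards [hg0] with ω g0
    intro a b hab
    exact ENNReal.ofReal_le_ofReal (mul_le_mul_of_nonneg_right
      (min_le_min le_rfl (Nat.cast_le.2 hab)) g0)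
  have hmeasn : ∀ n : ℕ, AEMeasurable (fun ω => ENNReal.ofReal (hn n ω * g ω)) μ := fun n =>
    ENNReal.measurable_ofReal.comp_aemeasurable (hint_n n).1.aemeasurable
  rw [lintegral_iSup' hmeasn hmono]
  have hle : ∀ n : ℕ, ∫⁻ ω, ENNReal.ofReal (hn n ω * g ω) ∂μ
      ≤ ENNReal.ofReal (∫ ω, h ω * (μ[g|m]) ω ∂μ) := by
    intro n
    rw [← ofReal_integral_eq_lintegral_ofReal (hint_n n) ?_]
    · exact ENNReal.ofReal_le_ofReal (hIle n)
    · filter_upwards [hh0, hg0] with ω h0 g0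
      exact mul_nonneg (le_min h0 (Nat.cast_nonneg n)) g0
  exact lt_of_le_of_lt (iSup_le hle) ENNReal.ofReal_lt_top

/-- unbiasedness of the marginal estimating function `m_M`.
With nested sub-σ-algebras `𝒮 ⊆ ℋ ⊆ ℳ₁ ⊆ ⋯ ⊆ ℳ_{Δ−1} ⊆ ℱ` (convention `ℳ_Δ = ℱ`),
`A` ℳ₁-measurable `{0,1}`-valued with `p := E[A | ℋ] ∈ (0,1)` a.s., `A_j`
ℳ_{j+1}-measurable `{0,1}`-valued with `p_j := E[A_j | ℳ_j] ≤ 1 − δ` a.s., `Y` bounded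
nonnegative, and `p̃` 𝒮-measurable in `(0,1)` a.s.: if `β` is 𝒮-measurable and satisfies
the marginal excursion effect model
`e^{−β}·E[p⁻¹·E[AΠY | ℋ] | 𝒮] = E[(1−p)⁻¹·E[(1−A)ΠY | ℋ] | 𝒮]` a.s.,
then for any ℋ-measurable `c` and 𝒮-measurable `S` (all displayed expressions
integrable), `E[e^{−Aβ}·(Y − e^{c+Aβ})·J·(A − p̃)·S] = 0`. -/
theorem marginal_estimating_function_mean_zero
    {m0 : MeasurableSpace Ω} (μ : Measure Ω) [IsProbabilityMeasure μ]
    (Δ : ℕ) (hΔ : 1 ≤ Δ)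
    (mS mH : MeasurableSpace Ω) (M : ℕ → MeasurableSpace Ω)
    (hSH : mS ≤ mH) (hHM : mH ≤ M 1)
    (hMmono : ∀ j k, 1 ≤ j → j ≤ k → k ≤ Δ → M j ≤ M k)
    (hMΔ : M Δ = m0)
    (A : Ω → ℝ) (hA : Measurable[M 1] A) (hA01 : ∀ ω, A ω = 0 ∨ A ω = 1)
    (hp : ∀ᵐ ω ∂μ, 0 < (μ[A|mH]) ω ∧ (μ[A|mH]) ω < 1)
    (Aseq : ℕ → Ω → ℝ)
    (hAseq : ∀ j ∈ Finset.Icc 1 (Δ - 1), Measurable[M (j + 1)] (Aseq j))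
    (hAseq01 : ∀ j ∈ Finset.Icc 1 (Δ - 1), ∀ ω, Aseq j ω = 0 ∨ Aseq j ω = 1)
    (δ : ℝ) (hδ : 0 < δ)
    (hpj : ∀ j ∈ Finset.Icc 1 (Δ - 1), ∀ᵐ ω ∂μ, (μ[Aseq j|M j]) ω ≤ 1 - δ)
    (Y : Ω → ℝ) (hY0 : ∀ ω, 0 ≤ Y ω) (hYbd : ∃ C, ∀ ω, Y ω ≤ C)
    (ptil : Ω → ℝ) (hptilmeas : StronglyMeasurable[mS] ptil)
    (hptil : ∀ᵐ ω ∂μ, 0 < ptil ω ∧ ptil ω < 1)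
    (β : Ω → ℝ) (hβ : StronglyMeasurable[mS] β)
    (hmodel : (fun ω => exp (-(β ω)) *
        (μ[(fun ω' => ((μ[A|mH]) ω')⁻¹ *
          (μ[(fun ω'' => A ω'' * PiProd μ M Δ Aseq ω'' * Y ω'')|mH]) ω')|mS]) ω)
      =ᵐ[μ]
      μ[(fun ω' => (1 - (μ[A|mH]) ω')⁻¹ *
          (μ[(fun ω'' => (1 - A ω'') * PiProd μ M Δ Aseq ω'' * Y ω'')|mH]) ω')|mS])
    (c : Ω → ℝ) (hc : StronglyMeasurable[mH] c)
    (S : Ω → ℝ) (hS : StronglyMeasurable[mS] S)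
    (hint1 : Integrable (fun ω => A ω * PiProd μ M Δ Aseq ω * Y ω) μ)
    (hint0 : Integrable (fun ω => (1 - A ω) * PiProd μ M Δ Aseq ω * Y ω) μ)
    (hintObs1 : Integrable (fun ω => ((μ[A|mH]) ω)⁻¹ *
      (μ[(fun ω'' => A ω'' * PiProd μ M Δ Aseq ω'' * Y ω'')|mH]) ω) μ)
    (hintObs0 : Integrable (fun ω => (1 - (μ[A|mH]) ω)⁻¹ *
      (μ[(fun ω'' => (1 - A ω'') * PiProd μ M Δ Aseq ω'' * Y ω'')|mH]) ω) μ)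
    (hintMain : Integrable (fun ω => exp (-(A ω * β ω)) *
      (Y ω - exp (c ω + A ω * β ω)) * Jweight μ mH M Δ A Aseq ptil ω *
      (A ω - ptil ω) * S ω) μ) :
    ∫ ω, exp (-(A ω * β ω)) * (Y ω - exp (c ω + A ω * β ω)) *
      Jweight μ mH M Δ A Aseq ptil ω * (A ω - ptil ω) * S ω ∂μ = 0 := by
    classical
  -- σ-algebra inclusions
  have hMle : ∀ k, 1 ≤ k → k ≤ Δ → M k ≤ m0 := fun k h1 h2 => hMΔ ▸ hMmono k Δ h1 h2 le_rfl
  have hm1 : M 1 ≤ m0 := hMle 1 le_rfl hΔ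
  have hmH : mH ≤ m0 := hHM.trans hm1
  have hmS : mS ≤ m0 := hSH.trans hmH
  obtain ⟨CY, hCY⟩ := hYbd
  set p : Ω → ℝ := μ[A|mH] with hp_def
  set P : Ω → ℝ := PiProd μ M Δ Aseq with hP_def
  set r : ℕ → Ω → ℝ := fun j ω => (1 - Aseq j ω) / (1 - (μ[Aseq j|M j]) ω) with hr_def
  set Qf : ℕ → Ω → ℝ := fun k ω => ∏ j ∈ Finset.Icc 1 k, r j ω with hQf_def
  have hPQ : P = Qf (Δ - 1) := by
    rw [hP_def, hQf_def, hr_def]; rfl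
  set B : ℝ := (max 1 δ⁻¹) ^ (Δ - 1) with hB_def
  have hB1 : (1:ℝ) ≤ B := by
    rw [hB_def]
    calc (1:ℝ) = 1 ^ (Δ - 1) := (one_pow _).symm
      _ ≤ (max 1 δ⁻¹) ^ (Δ - 1) := pow_le_pow_left₀ (by norm_num) (le_max_left _ _) _
  -- a.e. bounds on the ratios
  have hG : ∀ᵐ ω ∂μ, ∀ j ∈ Finset.Icc 1 (Δ - 1), (μ[Aseq j|M j]) ω ≤ 1 - δ :=
    (Filter.eventually_all_finset _).2 hpj
  have hr_bd : ∀ᵐ ω ∂μ, ∀ j ∈ Finset.Icc 1 (Δ - 1), 0 ≤ r j ω ∧ r j ω ≤ δ⁻¹ := by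
    filter_upwards [hG] with ω hω j hj
    have h1 : δ ≤ 1 - (μ[Aseq j|M j]) ω := by linarith [hω j hj]
    have h0 : (0:ℝ) < 1 - (μ[Aseq j|M j]) ω := lt_of_lt_of_le hδ h1
    have hA01' := hAseq01 j hj ω
    have hnum0 : 0 ≤ 1 - Aseq j ω := by rcases hA01' with h | h <;> rw [h] <;> norm_num
    have hnum1 : 1 - Aseq j ω ≤ 1 := by rcases hA01' with h | h <;> rw [h] <;> norm_num
    refine ⟨div_nonneg hnum0 h0.le, ?_⟩
    rw [hr_def]
    simp only
    rw [div_le_iff₀ h0]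
    have h2 := mul_le_mul_of_nonneg_left h1 (inv_nonneg.2 hδ.le)
    rw [inv_mul_cancel₀ hδ.ne'] at h2
    linarith
  have hQ_bd : ∀ᵐ ω ∂μ, ∀ k ≤ Δ - 1, 0 ≤ Qf k ω ∧ Qf k ω ≤ B := by
    filter_upwards [hr_bd] with ω hω k hk
    have hsub : ∀ j ∈ Finset.Icc 1 k, j ∈ Finset.Icc 1 (Δ - 1) := by
      intro j hj
      simp only [Finset.mem_Icc] at *
      omega
    constructor
    · exact Finset.prod_nonneg fun j hj => (hω j (hsub j hj)).1
    · calc Qf k ω ≤ ∏ _j ∈ Finset.Icc 1 k, max 1 δ⁻¹ :=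
            Finset.prod_le_prod (fun j hj => (hω j (hsub j hj)).1)
              (fun j hj => le_max_of_le_right (hω j (hsub j hj)).2)
        _ = (max 1 δ⁻¹) ^ (Finset.Icc 1 k).card := Finset.prod_const _
        _ ≤ B := by
            rw [hB_def]
            exact pow_le_pow_right₀ (le_max_left _ _) (by rw [Nat.card_Icc]; omega)
  have hP_bd : ∀ᵐ ω ∂μ, 0 ≤ P ω ∧ P ω ≤ B := by
    filter_upwards [hQ_bd] with ω hω
    rw [hPQ]
    exact hω (Δ - 1) le_rfl
  -- measurability
  have hQsm : ∀ k, k ≤ Δ - 1 → StronglyMeasurable[M (k + 1)] (Qf k) := by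
    intro k hk
    have hmeas : Measurable[M (k + 1)] (Qf k) := by
      rw [hQf_def]
      apply Finset.measurable_prod
      intro j hj
      simp only [Finset.mem_Icc] at hj
      have hjle : M (j + 1) ≤ M (k + 1) :=
        hMmono (j + 1) (k + 1) (by omega) (by omega) (by omega)
      have hjle2 : M j ≤ M (k + 1) := hMmono j (k + 1) (by omega) (by omega) (by omega)
      have hjmem : j ∈ Finset.Icc 1 (Δ - 1) := by simp only [Finset.mem_Icc]; omega
      exact Measurable.div
        (measurable_const.sub ((hAseq j hjmem).mono hjle le_rfl))
        (measurable_const.sub ((stronglyMeasurable_condExp.measurable).mono hjle2 le_rfl))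
    exact hmeas.stronglyMeasurable
  have hPsm : StronglyMeasurable[m0] P := by
    have h1 := hQsm (Δ - 1) le_rfl
    have h2 : Δ - 1 + 1 = Δ := by omega
    rw [h2, hMΔ] at h1
    rw [hPQ]
    exact h1
  have hAsm : StronglyMeasurable[m0] A := (hA.mono hm1 le_rfl).stronglyMeasurable
  -- integrability of bounded functions
  have intBdd : ∀ (g : Ω → ℝ) (C : ℝ), AEStronglyMeasurable[m0] g μ →
      (∀ᵐ ω ∂μ, |g ω| ≤ C) → Integrable g μ := by
    intro g C hg h
    refine (integrable_const C).mono' hg ?_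
    filter_upwards [h] with ω hω
    rwa [Real.norm_eq_abs]
  have hA_abs : ∀ ω, |A ω| ≤ 1 := by
    intro ω; rcases hA01 ω with h | h <;> rw [h] <;> norm_num
  have hintA : Integrable A μ := intBdd A 1 hAsm.aestronglyMeasurable
    (Eventually.of_forall hA_abs)
  have hintP : Integrable P μ := intBdd P B hPsm.aestronglyMeasurable
    (by filter_upwards [hP_bd] with ω h; rw [abs_of_nonneg h.1]; exact h.2)
  have hintAP : Integrable (fun ω => A ω * P ω) μ := by
    refine intBdd _ B (hAsm.aestronglyMeasurable.mul hPsm.aestronglyMeasurable) ?_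
    filter_upwards [hP_bd] with ω h
    rw [abs_mul]
    calc |A ω| * |P ω| ≤ 1 * |P ω| := by
          apply mul_le_mul_of_nonneg_right (hA_abs ω) (abs_nonneg _)
      _ = |P ω| := one_mul _
      _ ≤ B := by rw [abs_of_nonneg h.1]; exact h.2
  have hint1AP : Integrable (fun ω => (1 - A ω) * P ω) μ := by
    refine intBdd _ (2 * B) (((stronglyMeasurable_const.sub hAsm).aestronglyMeasurable).mul
      hPsm.aestronglyMeasurable) ?_
    filter_upwards [hP_bd] with ω h
    rw [abs_mul]
    have h1 : |1 - A ω| ≤ 2 := by rcases hA01 ω with h' | h' <;> rw [h'] <;> norm_num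
    exact mul_le_mul h1 (by rw [abs_of_nonneg h.1]; exact h.2) (abs_nonneg _) (by norm_num)
  -- integrability of each ratio
  have hrint : ∀ j ∈ Finset.Icc 1 (Δ - 1), Integrable (r j) μ := by
    intro j hj
    simp only [Finset.mem_Icc] at hj
    have hjle : M (j + 1) ≤ m0 := hMle (j + 1) (by omega) (by omega)
    have hjle2 : M j ≤ m0 := hMle j (by omega) (by omega)
    refine intBdd _ δ⁻¹ (Measurable.aestronglyMeasurable ?_) ?_
    · rw [hr_def]
      exact Measurable.div
        (measurable_const.sub ((hAseq j (by simp only [Finset.mem_Icc]; omega)).mono hjle le_rfl))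
        (measurable_const.sub ((stronglyMeasurable_condExp.measurable).mono hjle2 le_rfl))
    · filter_upwards [hr_bd] with ω hω
      have h := hω j (by simp only [Finset.mem_Icc]; omega)
      rw [abs_of_nonneg h.1]
      exact h.2
  have hQint : ∀ k, k ≤ Δ - 1 → Integrable (Qf k) μ := by
    intro k hk
    have hk1 : k + 1 ≤ Δ := by omega
    refine intBdd _ B (Measurable.aestronglyMeasurable
      (((hQsm k hk).measurable).mono (hMle (k + 1) (by omega) hk1) le_rfl)) ?_
    filter_upwards [hQ_bd] with ω hω
    have h := hω k hk
    rw [abs_of_nonneg h.1]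
    exact h.2
  -- the telescoping property
  have hTel : ∀ k, k ≤ Δ - 1 → μ[Qf k|M 1] =ᵐ[μ] fun _ => (1:ℝ) := by
    intro k
    induction k with
    | zero =>
      intro _
      have hQ0 : Qf 0 = fun _ => (1:ℝ) := by
        funext ω
        rw [hQf_def]
        simp
      rw [hQ0, condExp_const hm1]
    | succ k ih =>
      intro hk1
      have hk : k ≤ Δ - 1 := by omega
      have hkmem : k + 1 ∈ Finset.Icc 1 (Δ - 1) := by simp only [Finset.mem_Icc]; omega
      have hM1k : M 1 ≤ M (k + 1) := hMmono 1 (k + 1) le_rfl (by omega) (by omega)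
      have hMk1 : M (k + 1) ≤ m0 := hMle (k + 1) (by omega) (by omega)
      have hintr : Integrable (r (k + 1)) μ := hrint _ hkmem
      have hintAk : Integrable (Aseq (k + 1)) μ := by
        refine intBdd _ 1 (Measurable.aestronglyMeasurable
          ((hAseq _ hkmem).mono (hMle (k + 2) (by omega) (by omega)) le_rfl)) ?_
        apply Eventually.of_forall
        intro ω
        rcases hAseq01 _ hkmem ω with h | h <;> rw [h] <;> norm_num
      have hint1Ak : Integrable (fun ω => 1 - Aseq (k + 1) ω) μ :=
        (integrable_const 1).sub hintAk
      have hcA : μ[(fun ω => 1 - Aseq (k + 1) ω)|M (k + 1)]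
          =ᵐ[μ] fun ω => 1 - (μ[Aseq (k + 1)|M (k + 1)]) ω := by
        have h1 := condExp_sub (m := M (k + 1)) (μ := μ) (integrable_const (1:ℝ)) hintAk
        refine EventuallyEq.trans ?_ (h1.trans ?_)
        · exact condExp_congr_ae (Eventually.of_forall fun ω => rfl)
        · rw [condExp_const hMk1]
          exact Eventually.of_forall fun ω => rfl
      have hpk := hpj (k + 1) hkmem
      have hinv_sm : StronglyMeasurable[M (k + 1)]
          (fun ω => (1 - (μ[Aseq (k + 1)|M (k + 1)]) ω)⁻¹) :=
        ((measurable_const.sub stronglyMeasurable_condExp.measurable).inv).stronglyMeasurable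
      have hprod_int : Integrable
          (fun ω => (1 - (μ[Aseq (k + 1)|M (k + 1)]) ω)⁻¹ * (1 - Aseq (k + 1) ω)) μ :=
        hintr.congr (Eventually.of_forall fun ω => by
          rw [hr_def]; simp only; rw [div_eq_inv_mul])
      have hcr : μ[r (k + 1)|M (k + 1)] =ᵐ[μ] fun _ => (1:ℝ) := by
        have h0 : μ[r (k + 1)|M (k + 1)] =ᵐ[μ]
            μ[(fun ω => (1 - (μ[Aseq (k + 1)|M (k + 1)]) ω)⁻¹ * (1 - Aseq (k + 1) ω))|M (k + 1)] :=
          condExp_congr_ae (Eventually.of_forall fun ω => by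
            rw [hr_def]; simp only; rw [div_eq_inv_mul])
        have h2 := condExp_mul_of_stronglyMeasurable_left hinv_sm hprod_int hint1Ak
        refine h0.trans (h2.trans ?_)
        filter_upwards [hpk, hcA] with ω h1 h2'
        simp only [Pi.mul_apply]
        rw [h2']
        have hne : 1 - (μ[Aseq (k + 1)|M (k + 1)]) ω ≠ 0 := by
          have : δ ≤ 1 - (μ[Aseq (k + 1)|M (k + 1)]) ω := by linarith
          linarith [lt_of_lt_of_le hδ this]
        field_simp
      have hQsucc : ∀ ω, Qf (k + 1) ω = Qf k ω * r (k + 1) ω := by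
        intro ω
        rw [hQf_def]
        simp only
        exact Finset.prod_Icc_succ_top (by omega) _
      have hQkr_int : Integrable (fun ω => Qf k ω * r (k + 1) ω) μ :=
        (hQint (k + 1) hk1).congr (Eventually.of_forall fun ω => hQsucc ω)
      have h3 := condExp_mul_of_stronglyMeasurable_left (hQsm k hk) hQkr_int hintr
      have h4 : μ[Qf (k + 1)|M (k + 1)] =ᵐ[μ] Qf k := by
        refine (condExp_congr_ae (Eventually.of_forall fun ω => hQsucc ω)).trans (h3.trans ?_)
        filter_upwards [hcr] with ω hω
        rw [Pi.mul_apply, hω, mul_one]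
      calc μ[Qf (k + 1)|M 1]
          =ᵐ[μ] μ[μ[Qf (k + 1)|M (k + 1)]|M 1] := (condExp_condExp_of_le hM1k hMk1).symm
        _ =ᵐ[μ] μ[Qf k|M 1] := condExp_congr_ae h4
        _ =ᵐ[μ] fun _ => (1:ℝ) := ih hk
  have hPM1 : μ[P|M 1] =ᵐ[μ] fun _ => (1:ℝ) := by
    rw [hPQ]
    exact hTel (Δ - 1) le_rfl
  -- conditional expectations of A·Π and (1−A)·Π given ℋ
  have hcAP : μ[(fun ω => A ω * P ω)|mH] =ᵐ[μ] p := by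
    have h1 := condExp_mul_of_stronglyMeasurable_left hA.stronglyMeasurable
      (show Integrable ((fun ω => A ω) * P) μ from hintAP) hintP
    have h2 : μ[(fun ω => A ω * P ω)|M 1] =ᵐ[μ] A := by
      refine h1.trans ?_
      filter_upwards [hPM1] with ω hω
      rw [Pi.mul_apply, hω, mul_one]
    calc μ[(fun ω => A ω * P ω)|mH]
        =ᵐ[μ] μ[μ[(fun ω => A ω * P ω)|M 1]|mH] := (condExp_condExp_of_le hHM hm1).symm
      _ =ᵐ[μ] μ[A|mH] := condExp_congr_ae h2
  have hc1AP : μ[(fun ω => (1 - A ω) * P ω)|mH] =ᵐ[μ] fun ω => 1 - p ω := by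
    have hsm1A : StronglyMeasurable[M 1] (fun ω => 1 - A ω) :=
      (measurable_const.sub hA).stronglyMeasurable
    have h1 := condExp_mul_of_stronglyMeasurable_left hsm1A
      (show Integrable ((fun ω => 1 - A ω) * P) μ from hint1AP) hintP
    have h2 : μ[(fun ω => (1 - A ω) * P ω)|M 1] =ᵐ[μ] fun ω => 1 - A ω := by
      refine h1.trans ?_
      filter_upwards [hPM1] with ω hω
      rw [Pi.mul_apply, hω, mul_one]
    have h3 : μ[(fun ω => 1 - A ω)|mH] =ᵐ[μ] fun ω => 1 - p ω := by
      have h4 := condExp_sub (m := mH) (μ := μ) (integrable_const (1:ℝ)) hintA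
      refine EventuallyEq.trans ?_ (h4.trans ?_)
      · exact condExp_congr_ae (Eventually.of_forall fun ω => rfl)
      · rw [condExp_const hmH, hp_def]
        exact Eventually.of_forall fun ω => rfl
    calc μ[(fun ω => (1 - A ω) * P ω)|mH]
        =ᵐ[μ] μ[μ[(fun ω => (1 - A ω) * P ω)|M 1]|mH] := (condExp_condExp_of_le hHM hm1).symm
      _ =ᵐ[μ] μ[(fun ω => 1 - A ω)|mH] := condExp_congr_ae h2
      _ =ᵐ[μ] fun ω => 1 - p ω := h3
  -- measurability of p⁻¹ and (1-p)⁻¹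
  have hpsm : StronglyMeasurable[mH] p := by rw [hp_def]; exact stronglyMeasurable_condExp
  have pinv_sm : StronglyMeasurable[mH] (fun ω => (p ω)⁻¹) :=
    (hpsm.measurable.inv).stronglyMeasurable
  have qinv_sm : StronglyMeasurable[mH] (fun ω => (1 - p ω)⁻¹) :=
    ((measurable_const.sub hpsm.measurable).inv).stronglyMeasurable
  have hpinv0 : ∀ᵐ ω ∂μ, 0 ≤ (p ω)⁻¹ := by
    filter_upwards [hp] with ω h; exact inv_nonneg.2 h.1.le
  have hqinv0 : ∀ᵐ ω ∂μ, 0 ≤ (1 - p ω)⁻¹ := by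
    filter_upwards [hp] with ω h; exact inv_nonneg.2 (by linarith)
  have hA0 : ∀ ω, 0 ≤ A ω := by
    intro ω; rcases hA01 ω with h | h <;> rw [h] <;> norm_num
  have h1A0 : ∀ ω, 0 ≤ 1 - A ω := by
    intro ω; rcases hA01 ω with h | h <;> rw [h] <;> norm_num
  -- integrability of the inverse-propensity-weighted terms
  have I1Y : Integrable (fun ω => (p ω)⁻¹ * (A ω * P ω * Y ω)) μ := by
    refine integrable_mul_condexp_aux hmH μ hint1 ?_ pinv_sm hpinv0 ?_
    · filter_upwards [hP_bd] with ω h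
      exact mul_nonneg (mul_nonneg (hA0 ω) h.1) (hY0 ω)
    · exact hintObs1
  have I0Y : Integrable (fun ω => (1 - p ω)⁻¹ * ((1 - A ω) * P ω * Y ω)) μ := by
    refine integrable_mul_condexp_aux hmH μ hint0 ?_ qinv_sm hqinv0 ?_
    · filter_upwards [hP_bd] with ω h
      exact mul_nonneg (mul_nonneg (h1A0 ω) h.1) (hY0 ω)
    · exact hintObs0
  have I1 : Integrable (fun ω => (p ω)⁻¹ * (A ω * P ω)) μ := by
    refine integrable_mul_condexp_aux hmH μ hintAP ?_ pinv_sm hpinv0 ?_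
    · filter_upwards [hP_bd] with ω h
      exact mul_nonneg (hA0 ω) h.1
    · refine (integrable_const (1:ℝ)).congr ?_
      filter_upwards [hcAP, hp] with ω h1 h2
      rw [h1, inv_mul_cancel₀ (ne_of_gt h2.1)]
  have I0 : Integrable (fun ω => (1 - p ω)⁻¹ * ((1 - A ω) * P ω)) μ := by
    refine integrable_mul_condexp_aux hmH μ hint1AP ?_ qinv_sm hqinv0 ?_
    · filter_upwards [hP_bd] with ω h
      exact mul_nonneg (h1A0 ω) h.1
    · refine (integrable_const (1:ℝ)).congr ?_
      filter_upwards [hc1AP, hp] with ω h1 h2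
      rw [h1, inv_mul_cancel₀ (by linarith : (1:ℝ) - p ω ≠ 0)]
  -- pull-out identities at ℋ
  have cY1 : μ[(fun ω => (p ω)⁻¹ * (A ω * P ω * Y ω))|mH] =ᵐ[μ]
      fun ω => (p ω)⁻¹ * (μ[(fun ω => A ω * P ω * Y ω)|mH]) ω := by
    exact condExp_mul_of_stronglyMeasurable_left pinv_sm I1Y hint1
  have cY0 : μ[(fun ω => (1 - p ω)⁻¹ * ((1 - A ω) * P ω * Y ω))|mH] =ᵐ[μ]
      fun ω => (1 - p ω)⁻¹ * (μ[(fun ω => (1 - A ω) * P ω * Y ω)|mH]) ω := by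
    exact condExp_mul_of_stronglyMeasurable_left qinv_sm I0Y hint0
  have c1 : μ[(fun ω => (p ω)⁻¹ * (A ω * P ω))|mH] =ᵐ[μ]
      fun ω => (p ω)⁻¹ * (μ[(fun ω => A ω * P ω)|mH]) ω := by
    exact condExp_mul_of_stronglyMeasurable_left pinv_sm I1 hintAP
  have c0 : μ[(fun ω => (1 - p ω)⁻¹ * ((1 - A ω) * P ω))|mH] =ᵐ[μ]
      fun ω => (1 - p ω)⁻¹ * (μ[(fun ω => (1 - A ω) * P ω)|mH]) ω := by
    exact condExp_mul_of_stronglyMeasurable_left qinv_sm I0 hint1AP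
  -- conditional expectation of Z given ℋ vanishes
  have hcZ : μ[(fun ω => (p ω)⁻¹ * (A ω * P ω) - (1 - p ω)⁻¹ * ((1 - A ω) * P ω))|mH]
      =ᵐ[μ] fun _ => (0:ℝ) := by
    have h1 := condExp_sub (m := mH) (μ := μ) I1 I0
    refine EventuallyEq.trans (condExp_congr_ae (Eventually.of_forall fun ω => rfl))
      (h1.trans ?_)
    filter_upwards [c1, c0, hcAP, hc1AP, hp] with ω e1 e0 eAP e1AP hpω
    simp only [Pi.sub_apply]
    rw [e1, e0, eAP, e1AP, inv_mul_cancel₀ (ne_of_gt hpω.1),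
      inv_mul_cancel₀ (by linarith : (1:ℝ) - p ω ≠ 0), sub_self]
  -- abbreviations for the model terms
  set G1 : Ω → ℝ :=
    fun ω => (p ω)⁻¹ * (μ[(fun ω'' => A ω'' * P ω'' * Y ω'')|mH]) ω with hG1_def
  set G0 : Ω → ℝ :=
    fun ω => (1 - p ω)⁻¹ * (μ[(fun ω'' => (1 - A ω'') * P ω'' * Y ω'')|mH]) ω with hG0_def
  set Z : Ω → ℝ :=
    fun ω => (p ω)⁻¹ * (A ω * P ω) - (1 - p ω)⁻¹ * ((1 - A ω) * P ω) with hZ_def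
  set F : Ω → ℝ := fun ω => rexp (-(A ω * β ω)) * (Y ω - rexp (c ω + A ω * β ω)) *
    Jweight μ mH M Δ A Aseq ptil ω * (A ω - ptil ω) * S ω with hF_def
  set Dset : ℕ → Set Ω := fun n => {ω | |S ω| ≤ (n : ℝ) ∧ |β ω| ≤ (n : ℝ)} with hD_def
  set Tn : ℕ → Ω → ℝ := fun n => (Dset n).indicator fun _ => (1:ℝ) with hTn_def
  have hDmeas : ∀ n : ℕ, MeasurableSet[mS] (Dset n) := by
    intro n
    simp only [hD_def]
    rw [Set.setOf_and]
    have hSabs : StronglyMeasurable[mS] fun ω => |S ω| :=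
      continuous_abs.comp_stronglyMeasurable hS
    have hβabs : StronglyMeasurable[mS] fun ω => |β ω| :=
      continuous_abs.comp_stronglyMeasurable hβ
    exact MeasurableSet.inter
      (hSabs.measurable measurableSet_Iic)
      (hβabs.measurable measurableSet_Iic)
  have hTsm : ∀ n : ℕ, StronglyMeasurable[mS] (Tn n) := by
    intro n
    rw [hTn_def]
    exact stronglyMeasurable_const.indicator (hDmeas n)
  have hTaesm : ∀ n : ℕ, AEStronglyMeasurable[m0] (Tn n) μ :=
    fun n => ((hTsm n).mono hmS).aestronglyMeasurable
  have hTval : ∀ (n : ℕ) (ω : Ω), Tn n ω = if ω ∈ Dset n then 1 else 0 := by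
    intro n ω
    simp only [hTn_def]
    rw [Set.indicator_apply]
  have hTbd : ∀ (n : ℕ) (ω : Ω), |Tn n ω| ≤ 1 := by
    intro n ω
    rw [hTval]
    by_cases hm : ω ∈ Dset n
    · rw [if_pos hm]; norm_num
    · rw [if_neg hm]; norm_num
  -- the per-truncation-level identity
  have hzero : ∀ n : ℕ, ∫ ω, F ω * Tn n ω ∂μ = 0 := by
    intro n
    set K : Ω → ℝ := fun ω => ptil ω * (1 - ptil ω) * (S ω * Tn n ω) with hK_def
    set L1 : Ω → ℝ := fun ω => K ω * rexp (-(β ω)) with hL1_def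
    set Lc : Ω → ℝ := fun ω => K ω * rexp (c ω) with hLc_def
    have hKptw : ∀ ω, 0 < ptil ω → ptil ω < 1 → |K ω| ≤ n := by
      intro ω h1 h2
      simp only [hK_def]
      rw [abs_mul, abs_mul]
      have e1 : |ptil ω| ≤ 1 := by rw [abs_of_pos h1]; linarith
      have e2 : |1 - ptil ω| ≤ 1 := by rw [abs_of_pos (by linarith)]; linarith
      have e3 : |S ω * Tn n ω| ≤ n := by
        rw [hTval]
        by_cases hm : ω ∈ Dset n
        · rw [if_pos hm, mul_one]
          have hm' : |S ω| ≤ (n : ℝ) ∧ |β ω| ≤ (n : ℝ) := hm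
          exact hm'.1
        · rw [if_neg hm, mul_zero, abs_zero]
          positivity
      calc |ptil ω| * |1 - ptil ω| * |S ω * Tn n ω| ≤ 1 * 1 * n := by
            exact mul_le_mul (mul_le_mul e1 e2 (abs_nonneg _) zero_le_one) e3
              (abs_nonneg _) (by norm_num)
        _ = n := by ring
    have hL1ptw : ∀ ω, 0 < ptil ω → ptil ω < 1 → |L1 ω| ≤ n * rexp n := by
      intro ω h1 h2
      by_cases hm : ω ∈ Dset n
      · simp only [hL1_def]
        rw [abs_mul]
        have hm' : |S ω| ≤ (n : ℝ) ∧ |β ω| ≤ (n : ℝ) := hm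
        refine mul_le_mul (hKptw ω h1 h2) ?_ (abs_nonneg _) (Nat.cast_nonneg n)
        rw [abs_of_pos (Real.exp_pos _)]
        exact Real.exp_le_exp.2 (le_trans (neg_le_abs _) hm'.2)
      · simp only [hL1_def, hK_def]
        rw [hTval, if_neg hm]
        simp only [mul_zero, zero_mul, abs_zero]
        positivity
    have hKbd : ∀ᵐ ω ∂μ, ‖K ω‖ ≤ n := by
      filter_upwards [hptil] with ω h
      rw [Real.norm_eq_abs]
      exact hKptw ω h.1 h.2
    have hL1bd : ∀ᵐ ω ∂μ, ‖L1 ω‖ ≤ n * rexp n := by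
      filter_upwards [hptil] with ω h
      rw [Real.norm_eq_abs]
      exact hL1ptw ω h.1 h.2
    have hKsm : StronglyMeasurable[mS] K := by
      rw [hK_def]
      exact (hptilmeas.mul (stronglyMeasurable_const.sub hptilmeas)).mul
        (hS.mul (hTsm n))
    have hL1sm : StronglyMeasurable[mS] L1 := by
      rw [hL1_def]
      exact hKsm.mul (Real.continuous_exp.comp_stronglyMeasurable hβ.neg)
    have hLcsm : StronglyMeasurable[mH] Lc := by
      rw [hLc_def]
      exact (hKsm.mono hSH).mul (Real.continuous_exp.comp_stronglyMeasurable hc)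
    have hKaesm : AEStronglyMeasurable[m0] K μ := ((hKsm.mono hmS)).aestronglyMeasurable
    have hL1aesm : AEStronglyMeasurable[m0] L1 μ := ((hL1sm.mono hmS)).aestronglyMeasurable
    -- pointwise decomposition
    have hsplit : ∀ ω, F ω * Tn n ω =
        L1 ω * ((p ω)⁻¹ * (A ω * P ω * Y ω))
        - K ω * ((1 - p ω)⁻¹ * ((1 - A ω) * P ω * Y ω))
        - Lc ω * Z ω := by
      intro ω
      rw [hF_def, hL1_def, hLc_def, hK_def, hZ_def]
      simp only [Jweight]
      rw [← hP_def, ← hp_def]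
      rcases hA01 ω with h | h
      · simp only [h, zero_mul, neg_zero, Real.exp_zero, sub_zero, add_zero,
          Real.rpow_zero, Real.rpow_one, one_mul, mul_zero, zero_sub]
        ring
      · have hexp : rexp (-(β ω)) * rexp (c ω + β ω) = rexp (c ω) := by
          rw [← Real.exp_add]
          congr 1
          ring
        simp only [h, one_mul, mul_one, sub_self, Real.rpow_zero, Real.rpow_one]
        rw [← hexp]
        ring
    -- integrability of the three pieces
    have intU1 : Integrable (fun ω => L1 ω * ((p ω)⁻¹ * (A ω * P ω * Y ω))) μ :=
      I1Y.bdd_mul (c := n * rexp n) hL1aesm hL1bd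
    have intU3 : Integrable
        (fun ω => K ω * ((1 - p ω)⁻¹ * ((1 - A ω) * P ω * Y ω))) μ :=
      I0Y.bdd_mul (c := n) hKaesm hKbd
    have intFT : Integrable (fun ω => F ω * Tn n ω) μ := by
      have h1 : Integrable (fun ω => Tn n ω * F ω) μ :=
        hintMain.bdd_mul (c := 1) (hTaesm n)
          (Eventually.of_forall fun ω => by rw [Real.norm_eq_abs]; exact hTbd n ω)
      exact h1.congr (Eventually.of_forall fun ω => mul_comm _ _)
    have intZ : Integrable Z μ := by
      rw [hZ_def]
      exact (I1.sub I0).congr (Eventually.of_forall fun ω => rfl)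
    have intU24 : Integrable (fun ω => Lc ω * Z ω) μ := by
      refine (((intU1.sub intU3).sub intFT).congr ?_)
      apply Eventually.of_forall
      intro ω
      simp only [Pi.sub_apply]
      have h := hsplit ω
      linarith
    -- the c-term integrates to zero
    have h24 : μ[(fun ω => Lc ω * Z ω)|mH] =ᵐ[μ] fun _ => (0:ℝ) := by
      have h1 : μ[(fun ω => Lc ω * Z ω)|mH] =ᵐ[μ] fun ω => Lc ω * (μ[Z|mH]) ω := by
        exact condExp_mul_of_stronglyMeasurable_left hLcsm intU24 intZ
      refine h1.trans ?_
      filter_upwards [hcZ] with ω hω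
      rw [hω]
      simp
    have hi24 : ∫ ω, Lc ω * Z ω ∂μ = 0 := by
      calc ∫ ω, Lc ω * Z ω ∂μ
          = ∫ ω, (μ[(fun ω => Lc ω * Z ω)|mH]) ω ∂μ := (integral_condExp hmH).symm
        _ = ∫ _ω, (0:ℝ) ∂μ := integral_congr_ae h24
        _ = 0 := integral_zero _ _
    -- the Y-terms match via the model
    have e1 : μ[(fun ω => L1 ω * ((p ω)⁻¹ * (A ω * P ω * Y ω)))|mH]
        =ᵐ[μ] fun ω => L1 ω * G1 ω := by
      have h1 : μ[(fun ω => L1 ω * ((p ω)⁻¹ * (A ω * P ω * Y ω)))|mH] =ᵐ[μ]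
          fun ω => L1 ω * (μ[(fun ω => (p ω)⁻¹ * (A ω * P ω * Y ω))|mH]) ω := by
        exact condExp_mul_of_stronglyMeasurable_left (hL1sm.mono hSH) intU1 I1Y
      refine h1.trans ?_
      filter_upwards [cY1] with ω hω
      rw [hω]
    have e3 : μ[(fun ω => K ω * ((1 - p ω)⁻¹ * ((1 - A ω) * P ω * Y ω)))|mH]
        =ᵐ[μ] fun ω => K ω * G0 ω := by
      have h1 : μ[(fun ω => K ω * ((1 - p ω)⁻¹ * ((1 - A ω) * P ω * Y ω)))|mH] =ᵐ[μ]
          fun ω => K ω * (μ[(fun ω => (1 - p ω)⁻¹ * ((1 - A ω) * P ω * Y ω))|mH]) ω := by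
        exact condExp_mul_of_stronglyMeasurable_left (hKsm.mono hSH) intU3 I0Y
      refine h1.trans ?_
      filter_upwards [cY0] with ω hω
      rw [hω]
    have e1S : μ[(fun ω => L1 ω * ((p ω)⁻¹ * (A ω * P ω * Y ω)))|mS]
        =ᵐ[μ] fun ω => L1 ω * (μ[G1|mS]) ω := by
      calc μ[(fun ω => L1 ω * ((p ω)⁻¹ * (A ω * P ω * Y ω)))|mS]
          =ᵐ[μ] μ[μ[(fun ω => L1 ω * ((p ω)⁻¹ * (A ω * P ω * Y ω)))|mH]|mS] :=
            (condExp_condExp_of_le hSH hmH).symm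
        _ =ᵐ[μ] μ[(fun ω => L1 ω * G1 ω)|mS] := condExp_congr_ae e1
        _ =ᵐ[μ] fun ω => L1 ω * (μ[G1|mS]) ω := by
            exact condExp_mul_of_stronglyMeasurable_left hL1sm
              (hintObs1.bdd_mul (c := n * rexp n) hL1aesm hL1bd) hintObs1
    have e3S : μ[(fun ω => K ω * ((1 - p ω)⁻¹ * ((1 - A ω) * P ω * Y ω)))|mS]
        =ᵐ[μ] fun ω => K ω * (μ[G0|mS]) ω := by
      calc μ[(fun ω => K ω * ((1 - p ω)⁻¹ * ((1 - A ω) * P ω * Y ω)))|mS]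
          =ᵐ[μ] μ[μ[(fun ω => K ω * ((1 - p ω)⁻¹ * ((1 - A ω) * P ω * Y ω)))|mH]|mS] :=
            (condExp_condExp_of_le hSH hmH).symm
        _ =ᵐ[μ] μ[(fun ω => K ω * G0 ω)|mS] := condExp_congr_ae e3
        _ =ᵐ[μ] fun ω => K ω * (μ[G0|mS]) ω := by
            exact condExp_mul_of_stronglyMeasurable_left hKsm
              (hintObs0.bdd_mul (c := n) hKaesm hKbd) hintObs0
    have hint13 : ∫ ω, L1 ω * ((p ω)⁻¹ * (A ω * P ω * Y ω)) ∂μ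
        = ∫ ω, K ω * ((1 - p ω)⁻¹ * ((1 - A ω) * P ω * Y ω)) ∂μ := by
      calc ∫ ω, L1 ω * ((p ω)⁻¹ * (A ω * P ω * Y ω)) ∂μ
          = ∫ ω, (μ[(fun ω => L1 ω * ((p ω)⁻¹ * (A ω * P ω * Y ω)))|mS]) ω ∂μ :=
            (integral_condExp hmS).symm
        _ = ∫ ω, K ω * (μ[G0|mS]) ω ∂μ := by
            refine integral_congr_ae (e1S.trans ?_)
            filter_upwards [hmodel] with ω hω
            calc L1 ω * (μ[G1|mS]) ω
                = K ω * (rexp (-(β ω)) * (μ[G1|mS]) ω) := by rw [hL1_def]; ring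
              _ = K ω * (μ[G0|mS]) ω := by rw [hω]
        _ = ∫ ω, (μ[(fun ω => K ω * ((1 - p ω)⁻¹ * ((1 - A ω) * P ω * Y ω)))|mS]) ω ∂μ :=
            (integral_congr_ae e3S).symm
        _ = ∫ ω, K ω * ((1 - p ω)⁻¹ * ((1 - A ω) * P ω * Y ω)) ∂μ := integral_condExp hmS
    -- assemble
    have h13 : Integrable (fun ω => L1 ω * ((p ω)⁻¹ * (A ω * P ω * Y ω))
        - K ω * ((1 - p ω)⁻¹ * ((1 - A ω) * P ω * Y ω))) μ := intU1.sub intU3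
    calc ∫ ω, F ω * Tn n ω ∂μ
        = ∫ ω, (L1 ω * ((p ω)⁻¹ * (A ω * P ω * Y ω))
            - K ω * ((1 - p ω)⁻¹ * ((1 - A ω) * P ω * Y ω))
            - Lc ω * Z ω) ∂μ := integral_congr_ae (Eventually.of_forall hsplit)
      _ = 0 := by
          rw [integral_sub h13 intU24, integral_sub intU1 intU3, hint13, hi24]
          ring
  -- dominated convergence in the truncation level
  have htendsto : Filter.Tendsto (fun n => ∫ ω, F ω * Tn n ω ∂μ)
      Filter.atTop (nhds (∫ ω, F ω ∂μ)) := by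
    refine tendsto_integral_of_dominated_convergence (fun ω => |F ω|)
      (fun n => hintMain.1.mul (hTaesm n)) hintMain.abs ?_ ?_
    · intro n
      apply Eventually.of_forall
      intro ω
      rw [Real.norm_eq_abs, abs_mul]
      calc |F ω| * |Tn n ω| ≤ |F ω| * 1 :=
            mul_le_mul_of_nonneg_left (hTbd n ω) (abs_nonneg _)
        _ = |F ω| := mul_one _
    · apply Eventually.of_forall
      intro ω
      have hev : ∀ᶠ n : ℕ in Filter.atTop, F ω * Tn n ω = F ω := by
        filter_upwards [Filter.eventually_ge_atTop (max ⌈|S ω|⌉₊ ⌈|β ω|⌉₊)] with n hn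
        have h1 : |S ω| ≤ (n : ℝ) :=
          le_trans (Nat.le_ceil _) (Nat.cast_le.2 (le_trans (le_max_left _ _) hn))
        have h2 : |β ω| ≤ (n : ℝ) :=
          le_trans (Nat.le_ceil _) (Nat.cast_le.2 (le_trans (le_max_right _ _) hn))
        rw [hTval, if_pos (show ω ∈ Dset n from ⟨h1, h2⟩), mul_one]
      exact Filter.Tendsto.congr' (hev.mono fun n h => h.symm) tendsto_const_nhds
  have h0 : Filter.Tendsto (fun _ : ℕ => (0:ℝ)) Filter.atTop (nhds (∫ ω, F ω ∂μ)) := by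
    have h1 := htendsto
    simp only [hzero] at h1
    exact h1
  exact tendsto_nhds_unique h0 tendsto_const_nhds
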